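/- Let F/E be a finite separable field extension, E'/E an arbitrary field extension, and F̂/E the Galois closure of F/E. Assume that E' ⊗_E F is a field, and let F̂_{E'} denote the Galois closure of E' ⊗_E F over E'. Then there exists a surjective E'-algebra homomorphism E' ⊗_E F̂ → F̂_{E'} restricting to the identity on E' ⊗_E F. -/

import Mathlib

open scoped TensorProduct

/-- Let `F/E` be finite separable, `E'/E` an arbitrary field extension, and suppose
`E' ⊗_E F` is a field (formalized: `T` is a field and the canonical map
`E' ⊗_E F → T` is bijective). Inside an algebraically closed field `Ω ⊇ T`, let
`F̂ = normalClosure E F Ω` be the Galois closure of `F/E` and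
`F̂_{E'} = normalClosure E' T Ω` the Galois closure of `T = E' ⊗_E F` over `E'`.
Then there is a surjective `E'`-algebra homomorphism `E' ⊗_E F̂ → F̂_{E'}`
restricting to the identity on `E' ⊗_E F`. -/
theorem surjective_base_change_of_galois_closure
    {E F E' T Ω : Type*} [Field E] [Field F] [Field E'] [Field T] [Field Ω]
    [Algebra E F] [Algebra E E'] [FiniteDimensional E F] [Algebra.IsSeparable E F]
    [Algebra E T] [Algebra E' T] [Algebra F T]
    [IsScalarTower E E' T] [IsScalarTower E F T]
    (hbij : Function.Bijective
      (Algebra.TensorProduct.productMap (IsScalarTower.toAlgHom E E' T)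
        (IsScalarTower.toAlgHom E F T)))
    [Algebra T Ω] [Algebra E Ω] [Algebra E' Ω] [Algebra F Ω]
    [IsScalarTower E F Ω] [IsScalarTower E E' Ω] [IsScalarTower E' T Ω]
    [IsScalarTower F T Ω] [IsAlgClosed Ω]
    (hF : ∀ f : F, algebraMap F Ω f ∈ IntermediateField.normalClosure E F Ω) :
    ∃ φ : (E' ⊗[E] ↥(IntermediateField.normalClosure E F Ω)) →ₐ[E'] ↥(IntermediateField.normalClosure E' T Ω),
      Function.Surjective φ ∧
        ∀ (e' : E') (f : F),
          ((φ (e' ⊗ₜ[E] ⟨algebraMap F Ω f, hF f⟩) : ↥(IntermediateField.normalClosure E' T Ω)) : Ω)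
            = algebraMap E' Ω e' * algebraMap F Ω f := by
  set Fhat := IntermediateField.normalClosure E F Ω with hFhat
  set N := IntermediateField.normalClosure E' T Ω with hN
  -- the equivalence E' ⊗ F ≃ T
  set e : E' ⊗[E] F ≃ₐ[E] T := AlgEquiv.ofBijective _ hbij with he
  -- every E-embedding σ : F → Ω extends to an E'-embedding τ : T → Ω
  have key : ∀ σ : F →ₐ[E] Ω, ∃ τ : T →ₐ[E'] Ω,
      ∀ f : F, τ (algebraMap F T f) = σ f := by
    intro σ
    have hcomm : ∀ (x : E') (y : F), Commute (Algebra.ofId E' Ω x) (σ y) :=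
      fun x y => mul_comm _ _
    set τ' : E' ⊗[E] F →ₐ[E'] Ω := Algebra.TensorProduct.lift (Algebra.ofId E' Ω) σ hcomm
      with hτ'
    set τE : T →ₐ[E] Ω := (τ'.restrictScalars E).comp e.symm.toAlgHom with hτE
    have he1 : ∀ x : E', e (x ⊗ₜ[E] (1:F)) = algebraMap E' T x := by
      intro x
      show Algebra.TensorProduct.productMap (IsScalarTower.toAlgHom E E' T) (IsScalarTower.toAlgHom E F T) (x ⊗ₜ[E] (1:F)) = _
      simp [he, AlgEquiv.ofBijective]
    have he2 : ∀ f : F, e ((1:E') ⊗ₜ[E] f) = algebraMap F T f := by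
      intro f
      show Algebra.TensorProduct.productMap (IsScalarTower.toAlgHom E E' T) (IsScalarTower.toAlgHom E F T) ((1:E') ⊗ₜ[E] f) = _
      simp [he, AlgEquiv.ofBijective]
    refine ⟨{ toRingHom := τE.toRingHom, commutes' := ?_ }, ?_⟩
    · intro x
      have : e.symm (algebraMap E' T x) = x ⊗ₜ[E] 1 := by
        rw [← he1 x, AlgEquiv.symm_apply_apply]
      simp [hτE, this, hτ', Algebra.TensorProduct.lift_tmul, Algebra.ofId_apply]
    · intro f
      have : e.symm (algebraMap F T f) = (1:E') ⊗ₜ[E] f := by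
        rw [← he2 f, AlgEquiv.symm_apply_apply]
      show τE (algebraMap F T f) = σ f
      simp [hτE, this, hτ', Algebra.TensorProduct.lift_tmul]
  -- Fhat ⊆ N
  have hle : ∀ x : Ω, x ∈ Fhat → x ∈ N := by
    have : Fhat ≤ (IntermediateField.restrictScalars E N) := by
      rw [hFhat, normalClosure_le_iff]
      intro σ
      rintro x ⟨f, rfl⟩
      obtain ⟨τ, hτ⟩ := key σ
      have : σ f ∈ τ.fieldRange := ⟨algebraMap F T f, hτ f⟩
      exact τ.fieldRange_le_normalClosure this
    exact fun x hx => this hx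
  -- inclusion Fhat → N as an E-algebra hom
  set j : Fhat →ₐ[E] N :=
    { toFun := fun x => ⟨x.1, hle x.1 x.2⟩
      map_one' := rfl
      map_mul' := fun _ _ => rfl
      map_zero' := rfl
      map_add' := fun _ _ => rfl
      commutes' := fun r => by
        apply Subtype.ext
        show algebraMap E Ω r = algebraMap E N r
        rw [IsScalarTower.algebraMap_apply E E' N, IsScalarTower.algebraMap_apply E E' Ω]
        rfl } with hj
  set φ : E' ⊗[E] Fhat →ₐ[E'] N :=
    Algebra.TensorProduct.lift (Algebra.ofId E' N) j (fun _ _ => mul_comm _ _) with hφ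
  set ψ : E' ⊗[E] Fhat →ₐ[E'] Ω := (IsScalarTower.toAlgHom E' N Ω).comp φ with hψ
  -- the range of ψ is an intermediate field
  have halg : ∀ x ∈ ψ.range, IsAlgebraic E' x := by
    rintro x ⟨y, rfl⟩
    have : IsIntegral E' y := IsIntegral.of_finite E' y
    exact (this.map ψ).isAlgebraic
  set R : IntermediateField E' Ω := ψ.range.toIntermediateField
    (fun x hx => ψ.range.inv_mem_of_algebraic (x := ⟨x, hx⟩) (halg x hx)) with hR
  have hFhatR : ∀ z : Ω, z ∈ Fhat → z ∈ R := by
    intro z hz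
    exact ⟨(1:E') ⊗ₜ[E] ⟨z, hz⟩, by simp [hψ, hφ, Algebra.TensorProduct.lift_tmul, hj]⟩
  have hNR : N ≤ R := by
    rw [hN, normalClosure_le_iff]
    intro τ
    rintro x ⟨t, rfl⟩
    obtain ⟨s, rfl⟩ := hbij.surjective t
    induction s using TensorProduct.induction_on with
    | zero => simp only [map_zero]; exact zero_mem R
    | tmul e' f =>
        rw [Algebra.TensorProduct.productMap_apply_tmul, map_mul]
        show τ (IsScalarTower.toAlgHom E E' T e') * τ (IsScalarTower.toAlgHom E F T f) ∈ R
        refine mul_mem ?_ ?_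
        · have h1 : τ (IsScalarTower.toAlgHom E E' T e') = algebraMap E' Ω e' := τ.commutes e'
          rw [h1]; exact R.algebraMap_mem e'
        · set στ : F →ₐ[E] Ω := (τ.restrictScalars E).comp (IsScalarTower.toAlgHom E F T)
          have h2 : στ f ∈ Fhat := AlgHom.fieldRange_le_normalClosure στ ⟨f, rfl⟩
          exact hFhatR _ h2
    | add a b ha hb => rw [map_add, map_add]; exact add_mem ha hb
  refine ⟨φ, ?_, ?_⟩
  · intro n
    have hn : (n : Ω) ∈ ψ.range := hNR n.2
    obtain ⟨x, hx⟩ := hn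
    exact ⟨x, Subtype.ext hx⟩
  · intro e' f
    have h : φ (e' ⊗ₜ[E] (⟨algebraMap F Ω f, hF f⟩ : Fhat))
        = Algebra.ofId E' (↥N) e' * j ⟨algebraMap F Ω f, hF f⟩ := by
      rw [hφ]; exact Algebra.TensorProduct.lift_tmul _ _ _ _ _
    rw [h, MulMemClass.coe_mul]
    congr 1
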